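/- There exists C > 0 such that for all 0 < λ < 1, ∫₀^{2π} [sin(x/2)/(W(x) + λ)] · (sin(x/2))^{−1/2} dx ≤ C λ^{−1/10}. -/

import Mathlib

set_option maxHeartbeats 1000000


open MeasureTheory Real Set Filter
open scoped Topology ENNReal ComplexConjugate

noncomputable section

/-- The fundamental periodic cell `I = [0, 2π)`. -/
def II : Set ℝ := Set.Ico 0 (2 * π)

/-- Lebesgue measure restricted to `I`. -/
def muI : Measure ℝ := volume.restrict II

/-- The dispersion relation `ω(x) = |sin(x/2)|`. -/
def omg (x : ℝ) : ℝ := |Real.sin (x / 2)|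

/-- `Ω(x,y,z) = ω(x) + ω(y) − ω(z) − ω(x+y−z)`. -/
def Omg (x y z : ℝ) : ℝ := omg x + omg y - omg z - omg (x + y - z)

/-- The representative of `x` modulo `2π` lying in `[0, 2π)`. -/
def mod2pi (x : ℝ) : ℝ := x - 2 * π * (⌊x / (2 * π)⌋ : ℝ)

/-- `h` on the fundamental cell: `h(x,z) = (z−x)/2 + 2 arcsin( tan(|z−x|/4) cos((x+z)/4) )`. -/
def h0 (x z : ℝ) : ℝ :=
  (z - x) / 2 + 2 * Real.arcsin (Real.tan (|z - x| / 4) * Real.cos ((x + z) / 4))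

/-- The extension of `h` to all of `ℝ²`: `h(x,z) = h(x mod 2π, z mod 2π) − (x − (x mod 2π))`. -/
def hFPU (x z : ℝ) : ℝ := h0 (mod2pi x) (mod2pi z) - (x - mod2pi x)

/-- `F₊(x,y) = (cos(x/2)+cos(y/2))² + 4 sin(x/2) sin(y/2)`. -/
def Fp (x y : ℝ) : ℝ :=
  (Real.cos (x / 2) + Real.cos (y / 2)) ^ 2 + 4 * Real.sin (x / 2) * Real.sin (y / 2)

/-- `F₋(x,y) = (cos(x/2)+cos(y/2))² − 4 sin(x/2) sin(y/2)`. -/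
def Fm (x y : ℝ) : ℝ :=
  (Real.cos (x / 2) + Real.cos (y / 2)) ^ 2 - 4 * Real.sin (x / 2) * Real.sin (y / 2)

/-- The kernel `K₁(x,y) = 4·𝟙(F₋(x,y) > 0)/√(F₋(x,y))`. -/
def K1 (x y : ℝ) : ℝ := if 0 < Fm x y then 4 / Real.sqrt (Fm x y) else 0

/-- The kernel `K₂(x,y) = 2/√(F₊(x,y))`. -/
def K2 (x y : ℝ) : ℝ := 2 / Real.sqrt (Fp x y)

/-- `V(x) = ∫_I K₂(x,y) dy`. -/
def VV (x : ℝ) : ℝ := ∫ y in II, K2 x y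

/-- `W(x) = sin²(x/2)·V(x)`. -/
def WW (x : ℝ) : ℝ := Real.sin (x / 2) ^ 2 * VV x

lemma Fp_lower {x y : ℝ} (hx : x ∈ Set.Ioo (0:ℝ) (2*π)) (hy : y ∈ Set.Icc (0:ℝ) (2*π)) :
    Real.sin (x/2) ^ 4 / 16 ≤ Fp x y := by
  obtain ⟨hx0, hx2⟩ := hx
  obtain ⟨hy0, hy2⟩ := hy
  have hπ := Real.pi_pos
  have hs : 0 < Real.sin (x/2) := Real.sin_pos_of_pos_of_lt_pi (by linarith) (by linarith)
  have hs1 : Real.sin (x/2) ≤ 1 := Real.sin_le_one _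
  have hsb : 0 ≤ Real.sin (y/2) := Real.sin_nonneg_of_nonneg_of_le_pi (by linarith) (by linarith)
  set s := Real.sin (x/2) with hsdef
  unfold Fp
  rw [← hsdef]
  rcases le_or_gt (s^2/8) (Real.sin (y/2)) with hb | hb
  · nlinarith [sq_nonneg (Real.cos (x/2) + Real.cos (y/2)),
      mul_le_mul_of_nonneg_left hb hs.le, pow_pos hs 3,
      mul_nonneg (by linarith : (0:ℝ) ≤ 1 - s) (by positivity : (0:ℝ) ≤ s^3)]
  · have hca : |Real.cos (x/2)| ≤ 1 - s^2/2 := by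
      have h1 : |Real.cos (x/2)|^2 = 1 - s^2 := by
        rw [sq_abs]
        have := Real.sin_sq_add_cos_sq (x/2); rw [← hsdef] at this; linarith
      nlinarith [abs_nonneg (Real.cos (x/2))]
    have hcb : 1 - s^4/64 ≤ |Real.cos (y/2)| := by
      have h1 : |Real.cos (y/2)|^2 = 1 - Real.sin (y/2)^2 := by
        rw [sq_abs]
        have := Real.sin_sq_add_cos_sq (y/2); linarith
      nlinarith [abs_nonneg (Real.cos (y/2)), Real.abs_cos_le_one (y/2), sq_nonneg (Real.sin (y/2))]
    have htri : |Real.cos (y/2)| ≤ |Real.cos (x/2) + Real.cos (y/2)| + |Real.cos (x/2)| := by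
      have h := abs_add_le (Real.cos (x/2) + Real.cos (y/2)) (-Real.cos (x/2))
      rw [abs_neg] at h
      have h2 : (Real.cos (x/2) + Real.cos (y/2)) + (-Real.cos (x/2)) = Real.cos (y/2) := by ring
      rw [h2] at h
      exact h
    have hs2 : (0:ℝ) ≤ 1 - s^2 :=
      mul_nonneg (by linarith : (0:ℝ) ≤ 1 - s) (by linarith : (0:ℝ) ≤ 1 + s) |>.trans_eq (by ring)
    have h5 : s^2/4 ≤ |Real.cos (x/2) + Real.cos (y/2)| := by
      nlinarith [mul_nonneg (sq_nonneg s) hs2]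
    have h6 : (s^2/4)^2 ≤ (Real.cos (x/2) + Real.cos (y/2))^2 := by
      rw [← sq_abs (Real.cos (x/2) + Real.cos (y/2))]
      exact pow_le_pow_left₀ (by positivity) h5 2
    nlinarith

lemma Fp_upper (x y : ℝ) : Fp x y ≤ 9 := by
  unfold Fp
  nlinarith [Real.neg_one_le_cos (x/2), Real.cos_le_one (x/2),
    Real.neg_one_le_cos (y/2), Real.cos_le_one (y/2),
    mul_nonneg (by linarith [Real.sin_le_one (x/2)] : (0:ℝ) ≤ 1 - Real.sin (x/2))
      (by linarith [Real.neg_one_le_sin (y/2)] : (0:ℝ) ≤ 1 + Real.sin (y/2)),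
    mul_nonneg (by linarith [Real.neg_one_le_sin (x/2)] : (0:ℝ) ≤ 1 + Real.sin (x/2))
      (by linarith [Real.sin_le_one (y/2)] : (0:ℝ) ≤ 1 - Real.sin (y/2)),
    sq_nonneg (Real.cos (x/2) + Real.cos (y/2))]

lemma K2_nonneg (x y : ℝ) : 0 ≤ K2 x y := by
  unfold K2; positivity

lemma K2_meas (x : ℝ) : Measurable (K2 x) := by
  have hc : Continuous fun y => Real.sqrt (Fp x y) := by
    apply Real.continuous_sqrt.comp
    unfold Fp
    fun_prop
  exact measurable_const.div hc.measurable

lemma K2_lower {x y : ℝ} (hx : x ∈ Set.Ioo (0:ℝ) (2*π)) (hy : y ∈ Set.Icc (0:ℝ) (2*π))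
    {M : ℝ} (hM : 0 < M) (hF : Fp x y ≤ M^2) : 2 / M ≤ K2 x y := by
  have hπ := Real.pi_pos
  have hs : 0 < Real.sin (x/2) :=
    Real.sin_pos_of_pos_of_lt_pi (by linarith [hx.1]) (by linarith [hx.2])
  have hFlb := Fp_lower hx hy
  have hF0 : 0 < Fp x y := lt_of_lt_of_le (by positivity) hFlb
  have h1 : Real.sqrt (Fp x y) ≤ M := by
    calc Real.sqrt (Fp x y) ≤ Real.sqrt (M^2) := Real.sqrt_le_sqrt hF
      _ = M := Real.sqrt_sq hM.le
  have h2 : 0 < Real.sqrt (Fp x y) := Real.sqrt_pos.2 hF0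
  unfold K2
  exact div_le_div_of_nonneg_left (by norm_num) h2 h1

lemma K2_integrable {x : ℝ} (hx : x ∈ Set.Ioo (0:ℝ) (2*π)) : IntegrableOn (K2 x) II := by
  have hπ := Real.pi_pos
  haveI hfin : IsFiniteMeasure (volume.restrict II) := by
    constructor
    rw [Measure.restrict_apply_univ, show II = Set.Ico 0 (2*π) from rfl, Real.volume_Ico]
    exact ENNReal.ofReal_lt_top
  have hs : 0 < Real.sin (x/2) :=
    Real.sin_pos_of_pos_of_lt_pi (by linarith [hx.1]) (by linarith [hx.2])
  apply Integrable.mono' (integrable_const (8 / Real.sin (x/2)^2))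
    ((K2_meas x).aestronglyMeasurable)
  filter_upwards [ae_restrict_mem (by exact measurableSet_Ico : MeasurableSet II)] with y hy
  have hFp := Fp_lower hx ⟨hy.1, hy.2.le⟩
  have h1 : Real.sin (x/2)^2/4 ≤ Real.sqrt (Fp x y) := by
    have h2 : Real.sqrt (Real.sin (x/2)^4/16) ≤ Real.sqrt (Fp x y) := Real.sqrt_le_sqrt hFp
    rwa [show Real.sin (x/2)^4/16 = (Real.sin (x/2)^2/4)^2 by ring,
      Real.sqrt_sq (by positivity)] at h2
  rw [Real.norm_eq_abs, abs_of_nonneg (K2_nonneg x y)]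
  unfold K2
  calc 2 / Real.sqrt (Fp x y) ≤ 2 / (Real.sin (x/2)^2/4) :=
        div_le_div_of_nonneg_left (by norm_num) (by positivity) h1
    _ = 8 / Real.sin (x/2)^2 := by rw [div_div_eq_mul_div]; norm_num

lemma WW_nonneg (x : ℝ) : 0 ≤ WW x := by
  unfold WW VV
  exact mul_nonneg (sq_nonneg _) (setIntegral_nonneg measurableSet_Ico fun y _ => K2_nonneg x y)

lemma VV_ge_piece {x : ℝ} (hx : x ∈ Set.Ioo (0:ℝ) (2*π)) {J : Set ℝ} (hJ : J ⊆ II)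
    (hJm : MeasurableSet J) {κ : ℝ} (hK : ∀ y ∈ J, κ ≤ K2 x y) :
    κ * (volume J).toReal ≤ VV x := by
  have hπ := Real.pi_pos
  have hint := K2_integrable hx
  have hJfin : volume J ≠ ⊤ := by
    refine ne_of_lt (lt_of_le_of_lt (measure_mono hJ) ?_)
    rw [show II = Set.Ico 0 (2*π) from rfl, Real.volume_Ico]
    exact ENNReal.ofReal_lt_top
  have h1 : κ * (volume J).toReal ≤ ∫ y in J, K2 x y :=
    by have := setIntegral_ge_of_const_le hJm hJfin hK (hint.mono_set hJ); rw [smul_eq_mul, mul_comm] at this; exact this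
  have h2 : ∫ y in J, K2 x y ≤ ∫ y in II, K2 x y :=
    setIntegral_mono_set hint (ae_of_all _ fun y => K2_nonneg x y)
      (HasSubset.Subset.eventuallyLE hJ)
  unfold VV
  linarith

lemma key_est {σ u : ℝ} (hσ : 0 < σ) (hσ1 : σ ≤ 1) (hu : σ ≤ u) (hu2 : u ≤ 2*σ) :
    (Real.cos (σ^3) - Real.cos u)^2 + 4 * Real.sin (σ^3) * Real.sin u ≤ 16 * σ^4 := by
  have hπ3 := Real.pi_gt_three
  have he0 : 0 < σ^3 := by positivity
  have heσ : σ^3 ≤ σ := by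
    have h1 : σ*σ ≤ 1*1 := mul_le_mul hσ1 hσ1 hσ.le zero_le_one
    nlinarith [mul_le_mul_of_nonneg_left h1 hσ.le]
  have hce := Real.one_sub_sq_div_two_le_cos (x := σ^3)
  have h1 : Real.cos (σ^3) - Real.cos u ≤ u^2/2 := by
    have h0 := Real.one_sub_sq_div_two_le_cos (x := u)
    have := Real.cos_le_one (σ^3); linarith
  have h2 : -(u^2/2) ≤ Real.cos (σ^3) - Real.cos u := by
    have h3 := Real.cos_le_one u
    have h4 : (σ^3)^2 ≤ u^2 := by nlinarith
    linarith
  have hsine : Real.sin (σ^3) ≤ σ^3 := Real.sin_le he0.le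
  have hsinu : Real.sin u ≤ u := Real.sin_le (by linarith)
  have hsine0 : 0 ≤ Real.sin (σ^3) :=
    Real.sin_nonneg_of_nonneg_of_le_pi he0.le (by nlinarith)
  have hsinu0 : 0 ≤ Real.sin u := Real.sin_nonneg_of_nonneg_of_le_pi (by linarith) (by nlinarith)
  have hsq : (Real.cos (σ^3) - Real.cos u)^2 ≤ (u^2/2)^2 := by
    nlinarith [mul_nonneg (by linarith : (0:ℝ) ≤ u^2/2 - (Real.cos (σ^3) - Real.cos u))
      (by linarith : (0:ℝ) ≤ u^2/2 + (Real.cos (σ^3) - Real.cos u))]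
  have hprod : Real.sin (σ^3) * Real.sin u ≤ σ^3 * u := mul_le_mul hsine hsinu hsinu0 he0.le
  have hu2sq : u^2 ≤ 4*σ^2 := by nlinarith
  have hu4 : u^4 ≤ 16*σ^4 := by nlinarith [sq_nonneg u, sq_nonneg σ]
  nlinarith [mul_le_mul hu2sq (le_refl u) (by linarith : (0:ℝ) ≤ u) (by positivity : (0:ℝ) ≤ 4*σ^2)]

lemma sin_min_facts {x : ℝ} (hx : x ∈ Set.Ioo (0:ℝ) (2*π)) :
    Real.sin (x/2) = Real.sin (min (x/2) (π - x/2)) ∧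
    min (x/2) (π - x/2) / 2 ≤ Real.sin (x/2) ∧
    Real.sin (x/2) ≤ min (x/2) (π - x/2) ∧
    0 < min (x/2) (π - x/2) ∧ min (x/2) (π - x/2) ≤ π/2 := by
  obtain ⟨hx0, hx2⟩ := hx
  have hπ := Real.pi_pos
  have hπ4 := Real.pi_le_four
  set e := min (x/2) (π - x/2) with hedef
  have he0 : 0 < e := lt_min (by linarith) (by linarith)
  have heπ : e ≤ π/2 := by
    rcases le_total (x/2) (π/2) with h | h
    · exact le_trans (min_le_left _ _) h
    · exact le_trans (min_le_right _ _) (by linarith)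
  have hseq : Real.sin (x/2) = Real.sin e := by
    rcases le_total (x/2) (π - x/2) with h | h
    · rw [hedef, min_eq_left h]
    · rw [hedef, min_eq_right h, Real.sin_pi_sub]
  have hjordan : e/2 ≤ Real.sin e := by
    have h1 := Real.mul_le_sin he0.le heπ
    have h2 : (1:ℝ)/2 ≤ 2/π := by
      rw [div_le_div_iff₀ (by norm_num) hπ]
      linarith
    nlinarith [mul_le_mul_of_nonneg_right h2 he0.le]
  exact ⟨hseq, by rw [hseq]; exact hjordan, by rw [hseq]; exact Real.sin_le he0.le, he0, heπ⟩

lemma VV_lower {x : ℝ} (hx : x ∈ Set.Ioo (0:ℝ) (2*π)) :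
    1/2 * Real.sin (x/2) ^ (-(1:ℝ)/3) ≤ VV x := by
  have hπ := Real.pi_pos
  have hπ3 := Real.pi_gt_three
  obtain ⟨hx0, hx2⟩ := hx
  obtain ⟨hseq, hsge, hsle, he0, heπ⟩ := sin_min_facts ⟨hx0, hx2⟩
  set e := min (x/2) (π - x/2) with hedef
  set s := Real.sin (x/2) with hsdef
  have hs0 : 0 < s := by
    rw [hsdef]
    exact Real.sin_pos_of_pos_of_lt_pi (by linarith) (by linarith)
  rcases le_or_gt e (1/2) with he2 | he2
  · -- small case
    set σ := e ^ ((1:ℝ)/3) with hσdef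
    have hσ0 : 0 < σ := Real.rpow_pos_of_pos he0 _
    have hσ3 : σ^3 = e := by
      rw [hσdef, ← Real.rpow_natCast (e ^ ((1:ℝ)/3)) 3, ← Real.rpow_mul he0.le]
      norm_num
    have hσ1 : σ ≤ 1 := Real.rpow_le_one he0.le (by linarith) (by norm_num)
    have hVσ : 1/σ ≤ VV x := by
      have hmain : ∀ J : Set ℝ, J ⊆ II → MeasurableSet J → (volume J).toReal = 2*σ →
          (∀ y ∈ J, Fp x y ≤ (4*σ^2)^2) → 1/σ ≤ VV x := by
        intro J hJsub hJm hJvol hJF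
        have hK : ∀ y ∈ J, 2/(4*σ^2) ≤ K2 x y := by
          intro y hy
          have hyI : y ∈ Set.Icc (0:ℝ) (2*π) := ⟨(hJsub hy).1, (hJsub hy).2.le⟩
          exact K2_lower ⟨hx0, hx2⟩ hyI (by positivity) (hJF y hy)
        have := VV_ge_piece ⟨hx0, hx2⟩ hJsub hJm hK
        rw [hJvol] at this
        have hq : 2/(4*σ^2) * (2*σ) = 1/σ := by
          field_simp
          ring
        rw [← hq]
        exact this
      rcases le_total (x/2) (π - x/2) with hcase | hcase
      · -- e = x/2 ; J near 2π
        have heq : x/2 = e := (min_eq_left hcase).symm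
        apply hmain (Set.Icc (2*π - 4*σ) (2*π - 2*σ))
        · intro y hy
          constructor
          · have := hy.1; simp only [Set.mem_Icc] at hy; nlinarith [hy.1]
          · simp only [Set.mem_Icc] at hy; nlinarith [hy.2]
        · exact measurableSet_Icc
        · rw [Real.volume_Icc, ENNReal.toReal_ofReal (by nlinarith)]; ring
        · intro y hy
          simp only [Set.mem_Icc] at hy
          set u := π - y/2 with hudef
          have hu1 : σ ≤ u := by rw [hudef]; nlinarith [hy.2]
          have hu2 : u ≤ 2*σ := by rw [hudef]; nlinarith [hy.1]
          have hFpeq : Fp x y = (Real.cos (σ^3) - Real.cos u)^2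
              + 4 * Real.sin (σ^3) * Real.sin u := by
            unfold Fp
            rw [show y/2 = π - u by rw [hudef]; ring, Real.cos_pi_sub, Real.sin_pi_sub,
              heq, ← hσ3]
            ring
          rw [hFpeq, show ((4:ℝ)*σ^2)^2 = 16*σ^4 by ring]
          exact key_est hσ0 hσ1 hu1 hu2
      · -- e = π - x/2 ; J near 0
        have heq : π - x/2 = e := (min_eq_right hcase).symm
        apply hmain (Set.Icc (2*σ) (4*σ))
        · intro y hy
          simp only [Set.mem_Icc] at hy
          constructor
          · nlinarith [hy.1]
          · nlinarith [hy.2]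
        · exact measurableSet_Icc
        · rw [Real.volume_Icc, ENNReal.toReal_ofReal (by nlinarith)]; ring
        · intro y hy
          simp only [Set.mem_Icc] at hy
          set u := y/2 with hudef
          have hu1 : σ ≤ u := by rw [hudef]; nlinarith [hy.1]
          have hu2 : u ≤ 2*σ := by rw [hudef]; nlinarith [hy.2]
          have hFpeq : Fp x y = (Real.cos (σ^3) - Real.cos u)^2
              + 4 * Real.sin (σ^3) * Real.sin u := by
            unfold Fp
            rw [show x/2 = π - e by linarith, Real.cos_pi_sub, Real.sin_pi_sub, ← hσ3, ← hudef]
            ring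
          rw [hFpeq, show ((4:ℝ)*σ^2)^2 = 16*σ^4 by ring]
          exact key_est hσ0 hσ1 hu1 hu2
    -- conclude small case
    have hσs : σ ≤ 2 * s ^ ((1:ℝ)/3) := by
      have h1 : e ≤ 2*s := by linarith
      have h2 : σ ≤ (2*s) ^ ((1:ℝ)/3) := by
        rw [hσdef]
        exact Real.rpow_le_rpow he0.le h1 (by norm_num)
      have h3 : ((2*s) : ℝ)^((1:ℝ)/3) = 2^((1:ℝ)/3) * s^((1:ℝ)/3) :=
        Real.mul_rpow (by norm_num) hs0.le
      have h4 : (2:ℝ)^((1:ℝ)/3) ≤ 2 := by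
        nth_rewrite 2 [← Real.rpow_one 2]
        exact Real.rpow_le_rpow_of_exponent_le (by norm_num) (by norm_num)
      have h5 : 0 ≤ s^((1:ℝ)/3) := Real.rpow_nonneg hs0.le _
      have h6 : (2:ℝ)^((1:ℝ)/3) * s^((1:ℝ)/3) ≤ 2 * s^((1:ℝ)/3) :=
        mul_le_mul_of_nonneg_right h4 h5
      rw [h3] at h2
      linarith
    have hrw : s ^ (-(1:ℝ)/3) = (s ^ ((1:ℝ)/3))⁻¹ := by
      rw [show -(1:ℝ)/3 = -((1:ℝ)/3) by norm_num, Real.rpow_neg hs0.le]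
    rw [hrw]
    have hsp : 0 < s ^ ((1:ℝ)/3) := Real.rpow_pos_of_pos hs0 _
    have h6 : 1/(2 * s^((1:ℝ)/3)) ≤ 1/σ := one_div_le_one_div_of_le hσ0 hσs
    calc 1/2 * (s ^ ((1:ℝ)/3))⁻¹ = 1/(2 * s^((1:ℝ)/3)) := by
          rw [← one_div (s ^ ((1:ℝ)/3)), div_mul_div_comm, one_mul]
      _ ≤ 1/σ := h6
      _ ≤ VV x := hVσ
  · -- big case
    have hs4 : 1/4 ≤ s := by linarith
    have hV : π ≤ VV x := by
      have hK : ∀ y ∈ II, (2/3 : ℝ) ≤ K2 x y := by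
        intro y hy
        exact K2_lower ⟨hx0, hx2⟩ ⟨hy.1, hy.2.le⟩ (by norm_num)
          (by rw [show ((3:ℝ))^2 = 9 by norm_num]; exact Fp_upper x y)
      have := VV_ge_piece ⟨hx0, hx2⟩ (subset_refl II) measurableSet_Ico hK
      rw [show II = Set.Ico 0 (2*π) from rfl, Real.volume_Ico] at this
      rw [ENNReal.toReal_ofReal (by linarith)] at this
      calc π = 2/3 * (2*π - 0) * (3/4) := by ring
        _ ≤ 2/3 * (2*π - 0) := by nlinarith
        _ ≤ VV x := this
    have h8 : (1/2:ℝ) ≤ s ^ ((1:ℝ)/3) := by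
      have h1 : ((1/8:ℝ)) ^ ((1:ℝ)/3) ≤ s ^ ((1:ℝ)/3) :=
        Real.rpow_le_rpow (by norm_num) (by linarith) (by norm_num)
      have h2 : ((1/8:ℝ)) ^ ((1:ℝ)/3) = 1/2 := by
        rw [show (1/8:ℝ) = (1/2)^(3:ℕ) by norm_num, ← Real.rpow_natCast ((1:ℝ)/2) 3,
          ← Real.rpow_mul (by norm_num)]
        norm_num
      linarith
    have hrw : s ^ (-(1:ℝ)/3) = (s ^ ((1:ℝ)/3))⁻¹ := by
      rw [show -(1:ℝ)/3 = -((1:ℝ)/3) by norm_num, Real.rpow_neg hs0.le]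
    have hsp : 0 < s ^ ((1:ℝ)/3) := Real.rpow_pos_of_pos hs0 _
    have h9 : (s ^ ((1:ℝ)/3))⁻¹ ≤ 2 := by
      rw [inv_le_comm₀ (by positivity) (by norm_num)]
      linarith
    rw [hrw]
    nlinarith [h9]

lemma WW_lower {x : ℝ} (hx : x ∈ Set.Ioo (0:ℝ) (2*π)) :
    1/2 * Real.sin (x/2) ^ ((5:ℝ)/3) ≤ WW x := by
  have hπ := Real.pi_pos
  have hs0 : 0 < Real.sin (x/2) :=
    Real.sin_pos_of_pos_of_lt_pi (by linarith [hx.1]) (by linarith [hx.2])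
  have hV := VV_lower hx
  unfold WW
  have h1 : Real.sin (x/2)^2 * (1/2 * Real.sin (x/2) ^ (-(1:ℝ)/3))
      = 1/2 * Real.sin (x/2) ^ ((5:ℝ)/3) := by
    rw [← Real.rpow_natCast (Real.sin (x/2)) 2]
    rw [show Real.sin (x/2) ^ ((2:ℕ):ℝ) * (1/2 * Real.sin (x/2) ^ (-(1:ℝ)/3))
      = 1/2 * (Real.sin (x/2) ^ ((2:ℕ):ℝ) * Real.sin (x/2) ^ (-(1:ℝ)/3)) by ring]
    rw [← Real.rpow_add hs0]
    norm_num
  calc 1/2 * Real.sin (x/2) ^ ((5:ℝ)/3) = Real.sin (x/2)^2 * (1/2 * Real.sin (x/2) ^ (-(1:ℝ)/3)) :=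
        h1.symm
    _ ≤ Real.sin (x/2)^2 * VV x := by
        apply mul_le_mul_of_nonneg_left hV (sq_nonneg _)


open intervalIntegral in
theorem basic_resolvent_integral_bound :
    ∃ C > (0 : ℝ), ∀ lam ∈ Set.Ioo (0 : ℝ) 1,
      (∫ x in Set.Ioo (0 : ℝ) (2 * π),
          Real.sin (x / 2) / (WW x + lam) * Real.sin (x / 2) ^ (-(1 : ℝ) / 2))
        ≤ C * lam ^ (-(1 : ℝ) / 10) := by
  have hπ := Real.pi_pos
  have hπ3 := Real.pi_gt_three
  set A : ℝ := 2 * (6:ℝ)^((7:ℝ)/6) with hA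
  set B : ℝ := (5:ℝ)^((7:ℝ)/6) with hB
  have hA0 : 0 < A := by rw [hA]; positivity
  have hB0 : 0 < B := by rw [hB]; positivity
  refine ⟨12 * (A + B), by positivity, ?_⟩
  intro lam hlam
  obtain ⟨hl0, hl1⟩ := hlam
  set r : ℝ := -(7:ℝ)/6 with hr
  set δ : ℝ := lam ^ ((3:ℝ)/5) with hδ
  have hδ0 : 0 < δ := Real.rpow_pos_of_pos hl0 _
  set G : ℝ → ℝ := fun x => (A + B) * ((x + δ) ^ r + (2*π - x + δ) ^ r) with hG
  have hc1 : IntegrableOn (fun x : ℝ => (x + δ) ^ r) (Set.Ioo 0 (2*π)) := by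
    apply IntegrableOn.mono_set (t := Set.Icc 0 (2*π)) ?_ Set.Ioo_subset_Icc_self
    apply ContinuousOn.integrableOn_Icc
    apply ContinuousOn.rpow_const ((continuous_id.add continuous_const).continuousOn)
    intro z hz
    exact Or.inl (ne_of_gt (by linarith [hz.1, hδ0] : (0:ℝ) < z + δ))
  have hc2 : IntegrableOn (fun x : ℝ => (2*π - x + δ) ^ r) (Set.Ioo 0 (2*π)) := by
    apply IntegrableOn.mono_set (t := Set.Icc 0 (2*π)) ?_ Set.Ioo_subset_Icc_self
    apply ContinuousOn.integrableOn_Icc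
    apply ContinuousOn.rpow_const
      (((continuous_const.sub continuous_id).add continuous_const).continuousOn)
    intro z hz
    exact Or.inl (ne_of_gt (by linarith [hz.2, hδ0] : (0:ℝ) < 2*π - z + δ))
  have hGint : IntegrableOn G (Set.Ioo 0 (2*π)) := (hc1.add hc2).const_mul (A + B)
  -- pointwise bound
  have hpt : ∀ x ∈ Set.Ioo (0:ℝ) (2*π),
      Real.sin (x/2) / (WW x + lam) * Real.sin (x/2) ^ (-(1:ℝ)/2) ≤ G x := by
    intro x hx
    obtain ⟨hx0, hx2⟩ := hx
    obtain ⟨hseq, hsge, hsle, he0, heπ⟩ := sin_min_facts ⟨hx0, hx2⟩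
    set e := min (x/2) (π - x/2) with hedef
    set s := Real.sin (x/2) with hsdef
    have hs0 : 0 < s := Real.sin_pos_of_pos_of_lt_pi (by linarith) (by linarith)
    have hW := WW_lower ⟨hx0, hx2⟩
    have hW0 := WW_nonneg x
    have hD0 : 0 < WW x + lam := by linarith
    have hL : s / (WW x + lam) * s ^ (-(1:ℝ)/2) = s ^ ((1:ℝ)/2) / (WW x + lam) := by
      rw [div_mul_eq_mul_div]
      congr 1
      nth_rewrite 1 [← Real.rpow_one s]
      rw [← Real.rpow_add hs0]
      norm_num
    rw [hL]
    set m := min x (2*π - x) with hmdef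
    have hm : m = 2*e := by
      rw [hmdef, hedef]
      rcases le_total (x/2) (π - x/2) with h | h
      · rw [min_eq_left h, min_eq_left (by linarith : x ≤ 2*π - x)]; ring
      · rw [min_eq_right h, min_eq_right (by linarith : 2*π - x ≤ x)]; ring
    have hm0 : 0 < m := by rw [hm]; linarith
    have hsum : (m + δ) ^ r ≤ (x + δ) ^ r + (2*π - x + δ) ^ r := by
      rcases min_cases x (2*π - x) with ⟨h1, _⟩ | ⟨h1, _⟩
      · rw [hmdef, h1]
        have h2 : (0:ℝ) ≤ (2*π - x + δ) ^ r := Real.rpow_nonneg (by linarith) _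
        linarith
      · rw [hmdef, h1]
        have h2 : (0:ℝ) ≤ (x + δ) ^ r := Real.rpow_nonneg (by linarith) _
        linarith
    have hsum0 : 0 ≤ (x + δ) ^ r + (2*π - x + δ) ^ r := by
      have h1 : (0:ℝ) ≤ (x+δ)^r := Real.rpow_nonneg (by linarith) _
      have h2 : (0:ℝ) ≤ (2*π - x+δ)^r := Real.rpow_nonneg (by linarith) _
      linarith
    rcases le_or_gt s δ with hcase | hcase
    · -- small s
      have hb1 : s ^ ((1:ℝ)/2) / (WW x + lam) ≤ δ ^ ((1:ℝ)/2) / lam :=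
        div_le_div₀ (Real.rpow_nonneg hδ0.le _)
          (Real.rpow_le_rpow hs0.le hcase (by norm_num)) hl0 (by linarith)
      have hb2 : δ ^ ((1:ℝ)/2) / lam = δ ^ r := by
        rw [hδ, ← Real.rpow_mul hl0.le, ← Real.rpow_mul hl0.le,
          show (3:ℝ)/5 * ((1:ℝ)/2) = 3/10 by norm_num,
          show (3:ℝ)/5 * r = (3:ℝ)/10 - 1 by rw [hr]; norm_num,
          Real.rpow_sub hl0, Real.rpow_one]
      have hmδ : m + δ ≤ 5*δ := by
        have h1 : e ≤ 2*s := by linarith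
        rw [hm]; linarith
      have hb3 : (5*δ) ^ r ≤ (m + δ) ^ r :=
        Real.rpow_le_rpow_of_nonpos (by linarith) hmδ (by rw [hr]; norm_num)
      have hb4 : B * (5*δ) ^ r = δ ^ r := by
        rw [Real.mul_rpow (by norm_num) hδ0.le, hB,
          show (5:ℝ)^((7:ℝ)/6) * ((5:ℝ)^r * δ^r) = ((5:ℝ)^((7:ℝ)/6) * (5:ℝ)^r) * δ^r by ring,
          ← Real.rpow_add (by norm_num : (0:ℝ) < 5)]
        rw [show (7:ℝ)/6 + r = 0 by rw [hr]; norm_num, Real.rpow_zero, one_mul]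
      calc s ^ ((1:ℝ)/2) / (WW x + lam) ≤ δ ^ r := by rw [← hb2]; exact hb1
        _ = B * (5*δ)^r := hb4.symm
        _ ≤ B * (m + δ)^r := mul_le_mul_of_nonneg_left hb3 hB0.le
        _ ≤ B * ((x + δ) ^ r + (2*π - x + δ) ^ r) := mul_le_mul_of_nonneg_left hsum hB0.le
        _ ≤ G x := by
            simp only [hG]
            nlinarith [mul_nonneg hA0.le hsum0]
    · -- large s
      have h53 : (0:ℝ) < s ^ ((5:ℝ)/3) := Real.rpow_pos_of_pos hs0 _
      have hb1 : s ^ ((1:ℝ)/2) / (WW x + lam) ≤ s ^ ((1:ℝ)/2) / (1/2 * s ^ ((5:ℝ)/3)) :=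
        div_le_div_of_nonneg_left (Real.rpow_nonneg hs0.le _) (by positivity)
          (by linarith [hW])
      have hb2 : s ^ ((1:ℝ)/2) / (1/2 * s ^ ((5:ℝ)/3)) = 2 * s ^ r := by
        rw [show (1:ℝ)/2 * s ^ ((5:ℝ)/3) = s ^ ((5:ℝ)/3) / 2 by ring, div_div_eq_mul_div,
          show r = (1:ℝ)/2 - (5:ℝ)/3 by rw [hr]; norm_num, Real.rpow_sub hs0]
        ring
      have hms : m/4 ≤ s := by rw [hm]; linarith
      have hb3 : s ^ r ≤ (m/4) ^ r :=
        Real.rpow_le_rpow_of_nonpos (by linarith) hms (by rw [hr]; norm_num)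
      have hmδ2 : m + δ ≤ 3/2 * m := by
        have h1 : s ≤ m/2 := by rw [hm]; linarith
        linarith
      have hb4 : (3/2 * m) ^ r ≤ (m + δ) ^ r :=
        Real.rpow_le_rpow_of_nonpos (by linarith) hmδ2 (by rw [hr]; norm_num)
      have hb5 : 2 * (m/4) ^ r = A * (3/2 * m) ^ r := by
        rw [show m/4 = m * (1/4) by ring, Real.mul_rpow hm0.le (by norm_num),
          show (3:ℝ)/2 * m = m * (3/2) by ring, Real.mul_rpow hm0.le (by norm_num), hA,
          show 2 * (m ^ r * ((1:ℝ)/4) ^ r) = (2 * ((1:ℝ)/4) ^ r) * m ^ r by ring,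
          show 2 * (6:ℝ)^((7:ℝ)/6) * (m ^ r * ((3:ℝ)/2) ^ r)
            = (2 * ((6:ℝ)^((7:ℝ)/6) * ((3:ℝ)/2)^r)) * m ^ r by ring]
        congr 2
        have e1 : ((1:ℝ)/4) ^ r = (4:ℝ) ^ ((7:ℝ)/6) := by
          rw [show (1/4:ℝ) = 4⁻¹ by norm_num, Real.inv_rpow (by norm_num),
            ← Real.rpow_neg (by norm_num)]
          rw [show -r = (7:ℝ)/6 by rw [hr]; norm_num]
        have e2 : (6:ℝ)^((7:ℝ)/6) * ((3:ℝ)/2)^r = (4:ℝ) ^ ((7:ℝ)/6) := by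
          rw [show r = -((7:ℝ)/6) by rw [hr]; norm_num, Real.rpow_neg (by norm_num),
            ← div_eq_mul_inv, ← Real.div_rpow (by norm_num : (0:ℝ) ≤ 6) (by norm_num : (0:ℝ) ≤ 3/2)]
          norm_num
        rw [e1, e2]
      calc s ^ ((1:ℝ)/2) / (WW x + lam) ≤ 2 * s ^ r := by rw [← hb2]; exact hb1
        _ ≤ 2 * (m/4) ^ r := by linarith [hb3]
        _ = A * (3/2 * m) ^ r := hb5
        _ ≤ A * (m + δ) ^ r := mul_le_mul_of_nonneg_left hb4 hA0.le
        _ ≤ A * ((x + δ) ^ r + (2*π - x + δ) ^ r) := mul_le_mul_of_nonneg_left hsum hA0.le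
        _ ≤ G x := by
            simp only [hG]
            nlinarith [mul_nonneg hB0.le hsum0]
  -- monotonicity of the integral
  have hf0 : 0 ≤ᵐ[volume.restrict (Set.Ioo (0:ℝ) (2*π))]
      fun x => Real.sin (x/2) / (WW x + lam) * Real.sin (x/2) ^ (-(1:ℝ)/2) := by
    rw [EventuallyLE, ae_restrict_iff' measurableSet_Ioo]
    apply ae_of_all
    intro x hx
    have hs0 : 0 < Real.sin (x/2) :=
      Real.sin_pos_of_pos_of_lt_pi (by linarith [hx.1]) (by linarith [hx.2])
    have hD0 : 0 < WW x + lam := by linarith [WW_nonneg x]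
    exact mul_nonneg (div_nonneg hs0.le hD0.le) (Real.rpow_nonneg hs0.le _)
  have hfg : (fun x => Real.sin (x/2) / (WW x + lam) * Real.sin (x/2) ^ (-(1:ℝ)/2))
      ≤ᵐ[volume.restrict (Set.Ioo (0:ℝ) (2*π))] G := by
    rw [EventuallyLE, ae_restrict_iff' measurableSet_Ioo]
    exact ae_of_all _ hpt
  have hmono := integral_mono_of_nonneg hf0 hGint hfg
  -- value of the majorant integral
  have hr1 : r + 1 = -(1:ℝ)/6 := by rw [hr]; norm_num
  have hQ : δ ^ (-(1:ℝ)/6) = lam ^ (-(1:ℝ)/10) := by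
    rw [hδ, ← Real.rpow_mul hl0.le]
    norm_num
  have hI1 : ∫ x in Set.Ioo (0:ℝ) (2*π), (x + δ) ^ r ≤ 6 * lam ^ (-(1:ℝ)/10) := by
    rw [← integral_Ioc_eq_integral_Ioo,
      ← integral_of_le (by linarith : (0:ℝ) ≤ 2*π),
      integral_comp_add_right (f := fun u => u ^ r) δ,
      integral_rpow
        (Or.inr ⟨by rw [hr]; norm_num, Set.notMem_uIcc_of_lt (by linarith) (by linarith)⟩)]
    rw [zero_add, hr1]
    have hP : (0:ℝ) ≤ (2*π + δ) ^ (-(1:ℝ)/6) := Real.rpow_nonneg (by linarith) _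
    rw [show ((2*π + δ) ^ (-(1:ℝ)/6) - δ ^ (-(1:ℝ)/6)) / (-(1:ℝ)/6)
      = 6 * δ ^ (-(1:ℝ)/6) - 6 * (2*π + δ) ^ (-(1:ℝ)/6) by ring, hQ]
    linarith
  have hI2 : ∫ x in Set.Ioo (0:ℝ) (2*π), (2*π - x + δ) ^ r ≤ 6 * lam ^ (-(1:ℝ)/10) := by
    have hrw : ∀ x : ℝ, (2*π - x + δ) = (2*π + δ - x) := fun x => by ring
    simp_rw [hrw]
    rw [← integral_Ioc_eq_integral_Ioo,
      ← integral_of_le (by linarith : (0:ℝ) ≤ 2*π),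
      integral_comp_sub_left (fun u => u ^ r) (2*π + δ),
      show 2*π + δ - 2*π = δ by ring, sub_zero,
      integral_rpow
        (Or.inr ⟨by rw [hr]; norm_num, Set.notMem_uIcc_of_lt (by linarith) (by linarith)⟩)]
    rw [hr1]
    have hP : (0:ℝ) ≤ (2*π + δ) ^ (-(1:ℝ)/6) := Real.rpow_nonneg (by linarith) _
    rw [show ((2*π + δ) ^ (-(1:ℝ)/6) - δ ^ (-(1:ℝ)/6)) / (-(1:ℝ)/6)
      = 6 * δ ^ (-(1:ℝ)/6) - 6 * (2*π + δ) ^ (-(1:ℝ)/6) by ring, hQ]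
    linarith
  have hGval : ∫ x in Set.Ioo (0:ℝ) (2*π), G x ≤ 12 * (A + B) * lam ^ (-(1:ℝ)/10) := by
    simp only [hG]
    rw [MeasureTheory.integral_const_mul, integral_add hc1 hc2]
    have h1 := add_le_add hI1 hI2
    have h2 : (0:ℝ) < A + B := by linarith
    nlinarith [h1, h2]
  calc (∫ x in Set.Ioo (0 : ℝ) (2 * π),
        Real.sin (x / 2) / (WW x + lam) * Real.sin (x / 2) ^ (-(1 : ℝ) / 2))
      ≤ ∫ x in Set.Ioo (0:ℝ) (2*π), G x := hmono
    _ ≤ 12 * (A + B) * lam ^ (-(1:ℝ)/10) := hGval
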